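/- Let p be a prime, H >= 1, and P a prime with P > p^{2H}. Then all residues modulo P of the form d_1*ceil(P/p) + d_2*ceil(P/p^2) + ... + d_H*ceil(P/p^H) + x, with 0 <= d_i < p/10 and 0 <= x < ceil(P/p^H), are pairwise distinct modulo P. In particular, the set A of such residues has size at least (p/10)^H * (P/p^H) >= P/10^H. -/

import Mathlib

noncomputable def cc (p P j : ℕ) : ℕ := ⌈(P : ℝ) / (p : ℝ) ^ j⌉₊

lemma cc_low (p P j : ℕ) (hp : 0 < p) : P ≤ cc p P j * p ^ j := by
  unfold cc
  have hpj : (0:ℝ) < (p:ℝ) ^ j := by positivity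
  have h := Nat.le_ceil ((P : ℝ) / (p : ℝ) ^ j)
  rw [div_le_iff₀ hpj] at h
  exact_mod_cast h

lemma cc_up (p P j : ℕ) (hp : 0 < p) : cc p P j * p ^ j < P + p ^ j := by
  unfold cc
  have hpj : (0:ℝ) < (p:ℝ) ^ j := by positivity
  have h : (⌈(P : ℝ) / (p : ℝ) ^ j⌉₊ : ℝ) < (P : ℝ) / (p : ℝ) ^ j + 1 :=
    Nat.ceil_lt_add_one (by positivity)
  have h2 : ((⌈(P : ℝ) / (p : ℝ) ^ j⌉₊ : ℕ) : ℝ) * (p:ℝ)^j < (P:ℝ) + (p:ℝ)^j := by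
    calc ((⌈(P : ℝ) / (p : ℝ) ^ j⌉₊ : ℕ) : ℝ) * (p:ℝ)^j < ((P:ℝ)/(p:ℝ)^j + 1) * (p:ℝ)^j :=
          mul_lt_mul_of_pos_right h hpj
      _ = (P:ℝ) + (p:ℝ)^j := by field_simp
  exact_mod_cast h2

lemma cc_pos (p P j : ℕ) (hp : 0 < p) (hP : 0 < P) : 0 < cc p P j := by
  by_contra h
  have h0 : cc p P j = 0 := by omega
  have := cc_low p P j hp
  rw [h0] at this; simp at this; omega

lemma lemB (p P H k d : ℕ) (hp : 2 ≤ p) (hP : p ^ (2*H) < P)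
    (hk : k + 1 ≤ H) (hd : 10 * d < p) :
    (d + 1) * cc p P (k+1) ≤ cc p P k := by
  have hp0 : 0 < p := by omega
  have hpk : 0 < p ^ (k+1) := pow_pos hp0 _
  refine Nat.le_of_mul_le_mul_right ?_ hpk
  have h1 : cc p P (k+1) * p^(k+1) < P + p^(k+1) := cc_up p P (k+1) hp0
  have h2 : P * p ≤ cc p P k * p^(k+1) := by
    calc P * p ≤ (cc p P k * p^k) * p := Nat.mul_le_mul_right _ (cc_low p P k hp0)
      _ = cc p P k * p^(k+1) := by ring
  have ha : p ^ (k+1) * p ^ (k+1) ≤ p ^ (2*H) := by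
    rw [← pow_add]; exact Nat.pow_le_pow_right hp0 (by omega)
  have ha2 : p ≤ p^(k+1) := Nat.le_self_pow (by omega) p
  set a := p^(k+1) with hadef
  have haa : a * a < P := lt_of_le_of_lt ha hP
  have key : (d+1)*(P + a) ≤ P * p := by nlinarith
  calc (d + 1) * cc p P (k+1) * a = (d+1) * (cc p P (k+1) * a) := by ring
    _ ≤ (d+1) * (P + a) := Nat.mul_le_mul_left _ (le_of_lt h1)
    _ ≤ P * p := key
    _ ≤ cc p P k * a := h2

lemma claimA (p P H : ℕ) (hp : 2 ≤ p) (hP : p ^ (2*H) < P) :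
    ∀ n k, k + n ≤ H → ∀ (d : Fin n → ℕ) (x : ℕ),
      (∀ i, 10 * d i < p) → x < cc p P (k + n) →
      ∑ i : Fin n, d i * cc p P (k + (i:ℕ) + 1) + x < cc p P k := by
  intro n
  induction n with
  | zero => intro k hk d x hd hx; simpa using hx
  | succ n ih =>
    intro k hk d x hd hx
    have tail : ∑ i : Fin n, d i.succ * cc p P ((k+1) + (i:ℕ) + 1) + x < cc p P (k+1) := by
      apply ih (k+1) (by omega) _ _ (fun i => hd i.succ)
      convert hx using 2
      omega
    have hsum : ∑ i : Fin n, d i.succ * cc p P (k + (↑(i.succ):ℕ) + 1)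
        = ∑ i : Fin n, d i.succ * cc p P ((k+1) + (i:ℕ) + 1) := by
      refine Finset.sum_congr rfl fun i _ => ?_
      congr 2
      simp [Fin.val_succ]; omega
    rw [Fin.sum_univ_succ, hsum]
    have hB := lemB p P H k (d 0) hp hP (by omega) (hd 0)
    have : d 0 * cc p P (k + (↑(0 : Fin (n+1)):ℕ) + 1) = d 0 * cc p P (k+1) := by
      norm_num
    rw [this]
    calc d 0 * cc p P (k+1) + ∑ i : Fin n, d i.succ * cc p P ((k+1) + (i:ℕ) + 1) + x
        = d 0 * cc p P (k+1) + (∑ i : Fin n, d i.succ * cc p P ((k+1) + (i:ℕ) + 1) + x) := by ring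
      _ < d 0 * cc p P (k+1) + cc p P (k+1) := by omega
      _ = (d 0 + 1) * cc p P (k+1) := by ring
      _ ≤ cc p P k := hB

lemma digit_uniq (a b T T' C : ℕ) (hC : 0 < C) (hT : T < C) (hT' : T' < C)
    (h : a * C + T = b * C + T') : a = b ∧ T = T' := by
  have e1 : (C * a + T) / C = a + T / C := Nat.mul_add_div hC _ _
  have e2 : (C * b + T') / C = b + T' / C := Nat.mul_add_div hC _ _
  rw [Nat.div_eq_of_lt hT] at e1
  rw [Nat.div_eq_of_lt hT'] at e2
  have h2 : C * a + T = C * b + T' := by rw [mul_comm C a, mul_comm C b]; exact h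
  have hab : a = b := by rw [h2] at e1; omega
  refine ⟨hab, ?_⟩
  subst hab
  omega

lemma uniqA (p P H : ℕ) (hp : 2 ≤ p) (hP : 0 < P) (hPP : p ^ (2*H) < P) :
    ∀ n k, k + n ≤ H → ∀ (d d' : Fin n → ℕ) (x x' : ℕ),
      (∀ i, 10 * d i < p) → (∀ i, 10 * d' i < p) →
      x < cc p P (k + n) → x' < cc p P (k + n) →
      ∑ i : Fin n, d i * cc p P (k + (i:ℕ) + 1) + x
        = ∑ i : Fin n, d' i * cc p P (k + (i:ℕ) + 1) + x' →
      d = d' ∧ x = x' := by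
  intro n
  induction n with
  | zero =>
    intro k hk d d' x x' _ _ _ _ hE
    simp only [Finset.univ_eq_empty, Finset.sum_empty, zero_add] at hE
    exact ⟨funext fun i => i.elim0, hE⟩
  | succ n ih =>
    intro k hk d d' x x' hd hd' hx hx' hE
    have hsum : ∀ (e : Fin (n+1) → ℕ), ∑ i : Fin (n+1), e i * cc p P (k + (i:ℕ) + 1)
        = e 0 * cc p P (k+1) + ∑ i : Fin n, e i.succ * cc p P ((k+1) + (i:ℕ) + 1) := by
      intro e
      rw [Fin.sum_univ_succ]
      congr 1
      refine Finset.sum_congr rfl fun i _ => ?_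
      congr 2
      simp [Fin.val_succ]; omega
    rw [hsum d, hsum d'] at hE
    have hxcc : x < cc p P ((k+1) + n) := by convert hx using 2; omega
    have hx'cc : x' < cc p P ((k+1) + n) := by convert hx' using 2; omega
    have hT : ∑ i : Fin n, d i.succ * cc p P ((k+1) + (i:ℕ) + 1) + x < cc p P (k+1) :=
      claimA p P H hp hPP n (k+1) (by omega) _ _ (fun i => hd i.succ) hxcc
    have hT' : ∑ i : Fin n, d' i.succ * cc p P ((k+1) + (i:ℕ) + 1) + x' < cc p P (k+1) :=
      claimA p P H hp hPP n (k+1) (by omega) _ _ (fun i => hd' i.succ) hx'cc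
    have hC0 : 0 < cc p P (k+1) := cc_pos p P (k+1) (by omega) hP
    obtain ⟨h0, hTT⟩ := digit_uniq (d 0) (d' 0) _ _ _ hC0 hT hT'
      (by rw [← add_assoc, ← add_assoc]; exact hE)
    have htail := ih (k+1) (by omega) (fun i => d i.succ) (fun i => d' i.succ) x x'
      (fun i => hd i.succ) (fun i => hd' i.succ) hxcc hx'cc hTT
    refine ⟨funext fun i => ?_, htail.2⟩
    refine Fin.cases ?_ (fun j => ?_) i
    · exact h0
    · exact congrFun htail.1 j

theorem stmt_10 (p P H : ℕ) (hp : p.Prime) (hP : P.Prime) (hH : 1 ≤ H)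
    (hPp : p ^ (2 * H) < P) :
    (∀ (d d' : Fin H → ℕ) (x x' : ℕ),
      (∀ i, 10 * d i < p) → (∀ i, 10 * d' i < p) →
      x < ⌈(P : ℝ) / (p : ℝ) ^ H⌉₊ → x' < ⌈(P : ℝ) / (p : ℝ) ^ H⌉₊ →
      (∑ i : Fin H, d i * ⌈(P : ℝ) / (p : ℝ) ^ ((i : ℕ) + 1)⌉₊ + x) ≡
        (∑ i : Fin H, d' i * ⌈(P : ℝ) / (p : ℝ) ^ ((i : ℕ) + 1)⌉₊ + x') [MOD P] →
      d = d' ∧ x = x') ∧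
    (P : ℝ) / 10 ^ H ≤
      (Set.ncard {a : ZMod P | ∃ (d : Fin H → ℕ) (x : ℕ),
        (∀ i, 10 * d i < p) ∧ x < ⌈(P : ℝ) / (p : ℝ) ^ H⌉₊ ∧
        a = ((∑ i : Fin H, d i * ⌈(P : ℝ) / (p : ℝ) ^ ((i : ℕ) + 1)⌉₊ + x : ℕ) : ZMod P)} : ℝ) := by
  have hp2 := hp.two_le
  have hP0 := hP.pos
  have hcceq : ∀ j : ℕ, ⌈(P : ℝ) / (p : ℝ) ^ j⌉₊ = cc p P j := fun j => rfl
  have hcc0 : cc p P 0 = P := by simp [cc]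
  have hsA : ∀ (e : Fin H → ℕ), ∑ i : Fin H, e i * ⌈(P : ℝ) / (p : ℝ) ^ ((i : ℕ) + 1)⌉₊
      = ∑ i : Fin H, e i * cc p P (0 + (i : ℕ) + 1) := by
    intro e
    refine Finset.sum_congr rfl fun i _ => ?_
    rw [hcceq]
    congr 2
    omega
  have hxcc : ∀ x : ℕ, x < ⌈(P : ℝ) / (p : ℝ) ^ H⌉₊ → x < cc p P (0 + H) := by
    intro x hx
    rw [hcceq] at hx
    convert hx using 2
    omega
  have key : (∀ (d d' : Fin H → ℕ) (x x' : ℕ),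
      (∀ i, 10 * d i < p) → (∀ i, 10 * d' i < p) →
      x < ⌈(P : ℝ) / (p : ℝ) ^ H⌉₊ → x' < ⌈(P : ℝ) / (p : ℝ) ^ H⌉₊ →
      (∑ i : Fin H, d i * ⌈(P : ℝ) / (p : ℝ) ^ ((i : ℕ) + 1)⌉₊ + x) ≡
        (∑ i : Fin H, d' i * ⌈(P : ℝ) / (p : ℝ) ^ ((i : ℕ) + 1)⌉₊ + x') [MOD P] →
      d = d' ∧ x = x') := by
    intro d d' x x' hd hd' hx hx' hmod
    rw [hsA d, hsA d'] at hmod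
    have b1 : ∑ i : Fin H, d i * cc p P (0 + (i : ℕ) + 1) + x < cc p P 0 :=
      claimA p P H hp2 hPp H 0 (by omega) d x hd (hxcc x hx)
    have b2 : ∑ i : Fin H, d' i * cc p P (0 + (i : ℕ) + 1) + x' < cc p P 0 :=
      claimA p P H hp2 hPp H 0 (by omega) d' x' hd' (hxcc x' hx')
    rw [hcc0] at b1 b2
    have heq := Nat.ModEq.eq_of_lt_of_lt hmod b1 b2
    exact uniqA p P H hp2 hP0 hPp H 0 (by omega) d d' x x' hd hd'
      (hxcc x hx) (hxcc x' hx') heq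
  refine ⟨key, ?_⟩
  set m := (p + 9) / 10 with hm
  set F : (Fin H → Fin m) × Fin ⌈(P : ℝ) / (p : ℝ) ^ H⌉₊ → ZMod P := fun q =>
    ((∑ i : Fin H, (q.1 i : ℕ) * ⌈(P : ℝ) / (p : ℝ) ^ ((i : ℕ) + 1)⌉₊ + (q.2 : ℕ) : ℕ) : ZMod P)
    with hF
  have hFinj : Function.Injective F := by
    rintro ⟨a1, a2⟩ ⟨b1, b2⟩ hab
    have hmod := (ZMod.natCast_eq_natCast_iff _ _ _).mp hab
    obtain ⟨hdeq, hxeq⟩ := key (fun i => (a1 i : ℕ)) (fun i => (b1 i : ℕ)) (a2 : ℕ) (b2 : ℕ)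
      (fun i => by show 10 * ((a1 i : ℕ)) < p; have := (a1 i).isLt; omega)
      (fun i => by show 10 * ((b1 i : ℕ)) < p; have := (b1 i).isLt; omega)
      a2.isLt b2.isLt hmod
    simp only [Prod.mk.injEq]
    exact ⟨funext fun i => Fin.ext (congrFun hdeq i), Fin.ext hxeq⟩
  have hSet : {a : ZMod P | ∃ (d : Fin H → ℕ) (x : ℕ),
        (∀ i, 10 * d i < p) ∧ x < ⌈(P : ℝ) / (p : ℝ) ^ H⌉₊ ∧
        a = ((∑ i : Fin H, d i * ⌈(P : ℝ) / (p : ℝ) ^ ((i : ℕ) + 1)⌉₊ + x : ℕ) : ZMod P)}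
      = Set.range F := by
    ext a
    simp only [Set.mem_setOf_eq, Set.mem_range]
    constructor
    · rintro ⟨d, x, hd, hx, rfl⟩
      exact ⟨⟨fun i => ⟨d i, by have := hd i; omega⟩, ⟨x, hx⟩⟩, rfl⟩
    · rintro ⟨q, rfl⟩
      exact ⟨fun i => (q.1 i : ℕ), (q.2 : ℕ),
        fun i => by show 10 * ((q.1 i : ℕ)) < p; have := (q.1 i).isLt; omega, q.2.isLt, rfl⟩
  have hcard : (Set.range F).ncard = m ^ H * ⌈(P : ℝ) / (p : ℝ) ^ H⌉₊ := by
    rw [← Nat.card_coe_set_eq, Nat.card_range_of_injective hFinj]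
    simp [Nat.card_eq_fintype_card]
  rw [hSet, hcard]
  have hpne : (p : ℝ) ≠ 0 := by positivity
  have h1n : p ≤ 10 * m := by omega
  have h1 : (p : ℝ) / 10 ≤ (m : ℝ) := by
    rw [div_le_iff₀ (by norm_num : (0:ℝ) < 10)]
    have h10 : (p:ℝ) ≤ 10 * (m:ℝ) := by exact_mod_cast h1n
    linarith
  have h2 : (P : ℝ) / (p : ℝ) ^ H ≤ ((⌈(P : ℝ) / (p : ℝ) ^ H⌉₊ : ℕ) : ℝ) := Nat.le_ceil _
  calc (P : ℝ) / 10 ^ H = ((p : ℝ) / 10) ^ H * ((P : ℝ) / (p : ℝ) ^ H) := by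
        rw [div_pow]
        field_simp
      _ ≤ (m : ℝ) ^ H * ((⌈(P : ℝ) / (p : ℝ) ^ H⌉₊ : ℕ) : ℝ) :=
        mul_le_mul (pow_le_pow_left₀ (by positivity) h1 H) h2 (by positivity) (by positivity)
      _ = ((m ^ H * ⌈(P : ℝ) / (p : ℝ) ^ H⌉₊ : ℕ) : ℝ) := by push_cast; ring
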